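/- If v is a word over X^± whose Munn tree T_v contains the reduced word w but does not contain the edge from w to wx (for x ∈ X^± with wx reduced), then v factors as v = e₁'x₁⋯e_m'x_m · q · y₁f₁'⋯y_nf_n', where w = x₁⋯x_m reduced, each e_i' is an idempotent word avoiding x_i, the word q is an idempotent word avoiding x, y₁⋯y_n is the reduced form of w⁻¹·(reduction of v) with y₁ ≠ x, and each f_i' is an idempotent word avoiding ȳ_i. -/

import Mathlib

/-- The symmetric alphabet `X^± = X ∪ X̄`, encoded as pairs (letter, sign). -/
abbrev Letter (X : Type) : Type := X × Bool

/-- Formal inverse of a letter. -/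
def linv {X : Type} (a : Letter X) : Letter X := (a.1, !a.2)

/-- `wordInv v` is `v̄`: the reverse of `v` with every letter replaced by its inverse. -/
def wordInv {X : Type} (v : List (Letter X)) : List (Letter X) := v.reverse.map linv

/-- The vertex set of the Munn tree of `w`: reductions of all prefixes of `w` in FG(X). -/
def munn {X : Type} (w : List (Letter X)) : Set (FreeGroup X) :=
  {g | ∃ p : List (Letter X), p <+: w ∧ FreeGroup.mk p = g}

/-- A word represents an idempotent of FIM(X) iff it reduces to 1 in FG(X). -/
def IsIdemWord {X : Type} (w : List (Letter X)) : Prop := FreeGroup.mk w = 1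

/-- A word is reduced iff it has no adjacent mutually inverse letters. -/
def Reduced {X : Type} (w : List (Letter X)) : Prop :=
  List.Chain' (fun a b => b ≠ linv a) w

/-- The Munn tree of `w` contains the edge from (the reduced word) `p` to `p · a`. -/
def EdgeIn {X : Type} (w : List (Letter X)) (p : List (Letter X)) (a : Letter X) : Prop :=
  Reduced (p ++ [a]) ∧ FreeGroup.mk p ∈ munn w ∧ FreeGroup.mk (p ++ [a]) ∈ munn w

/-- An idempotent word avoids `x` iff its Munn tree omits the edge `(ε, x)`. -/
def Avoids {X : Type} (w : List (Letter X)) (x : Letter X) : Prop := ¬ EdgeIn w [] x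

/-- Equality in the free inverse monoid FIM(X): equality of Munn trees. -/
def EqFIM {X : Type} (u v : List (Letter X)) : Prop :=
  FreeGroup.mk u = FreeGroup.mk v ∧ munn u = munn v

/-- The alphabet `X^± ∪ {#}`. -/
abbrev HSym (X : Type) : Type := Letter X ⊕ Unit

/-- The hashSym symbol. -/
def hashSym {X : Type} : HSym X := Sum.inr ()

/-- `encode u v = u # v̄`. -/
def encode {X : Type} (u v : List (Letter X)) : List (HSym X) :=
  u.map Sum.inl ++ hashSym :: (wordInv v).map Sum.inl


instance {T N : Type} [DecidableEq T] [DecidableEq N] : DecidableEq (ContextFreeRule T N) :=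
  fun a b => decidable_of_iff (a.input = b.input ∧ a.output = b.output)
    (by cases a; cases b; simp)

/-- Interleaving `e₁x₁e₂x₂⋯e_mx_m`. -/
def interE {X : Type} (es : List (List (Letter X))) (xs : List (Letter X)) : List (Letter X) :=
  (List.zipWith (fun e x => e ++ [x]) es xs).flatten

/-- Interleaving `y₁f₁y₂f₂⋯y_nf_n`. -/
def interF {X : Type} (ys : List (Letter X)) (fs : List (List (Letter X))) : List (Letter X) :=
  (List.zipWith (fun y f => y :: f) ys fs).flatten

/-- Derivability of a terminal word from a given nonterminal of a grammar. -/
def DerivesFrom {T : Type} (g : ContextFreeGrammar T) (n : g.NT) (w : List T) : Prop :=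
  g.Derives [Symbol.nonterminal n] (w.map Symbol.terminal)

namespace Helper
variable {X : Type}

theorem mk_app (u v : List (Letter X)) :
    FreeGroup.mk (u ++ v) = FreeGroup.mk u * FreeGroup.mk v := (FreeGroup.mul_mk).symm

theorem mk_nil_eq : (FreeGroup.mk ([] : List (Letter X))) = 1 := FreeGroup.one_eq_mk.symm

theorem mk_linv (a : Letter X) : FreeGroup.mk [linv a] = (FreeGroup.mk [a])⁻¹ := by
  rw [FreeGroup.inv_mk]
  rfl

theorem prefix_append_left (u : List (Letter X)) {p v : List (Letter X)} (h : p <+: v) :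
    u ++ p <+: u ++ v := by
  obtain ⟨t, rfl⟩ := h
  exact ⟨t, by simp⟩

theorem reduce_eq_self_of_chain' [DecidableEq X] :
    ∀ {w : List (Letter X)}, Reduced w → FreeGroup.reduce w = w
  | [], _ => rfl
  | [a], _ => rfl
  | a :: b :: t, h => by
    have ht : FreeGroup.reduce (b :: t) = b :: t :=
      reduce_eq_self_of_chain' (List.isChain_cons_cons.mp h).2
    rw [FreeGroup.reduce.cons, ht]
    have hne : ¬ (a.1 = b.1 ∧ a.2 = !b.2) := by
      rintro ⟨h1, h2⟩
      exact (List.isChain_cons_cons.mp h).1 (by cases a; cases b; simp_all [linv])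
    simp [hne]

theorem not_chain'_decomp {α : Type*} (R : α → α → Prop) :
    ∀ (l : List α), ¬ List.Chain' R l → ∃ l₁ a b l₂, l = l₁ ++ a :: b :: l₂ ∧ ¬ R a b
  | [], h => absurd List.isChain_nil h
  | [a], h => absurd (List.isChain_singleton a) h
  | a :: b :: t, h => by
    rw [List.Chain', List.isChain_cons_cons] at h
    by_cases hab : R a b
    · obtain ⟨l₁, c, d, l₂, he, hr⟩ := not_chain'_decomp R (b :: t) (fun hc => h ⟨hab, hc⟩)
      exact ⟨a :: l₁, c, d, l₂, by rw [List.cons_append, ← he], hr⟩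
    · exact ⟨[], a, b, t, rfl, hab⟩

theorem chain'_of_reduce [DecidableEq X] {w : List (Letter X)}
    (h : FreeGroup.reduce w = w) : Reduced w := by
  by_contra hc
  obtain ⟨l₁, a, b, l₂, he, hr⟩ := not_chain'_decomp _ w hc
  have hb : b = linv a := not_not.mp hr
  refine FreeGroup.reduce.not (L₁ := w) (L₂ := l₁) (L₃ := l₂) (x := a.1) (b := a.2) ?_
  rw [h, he, hb]
  cases a
  rfl

theorem toWord_reduced [DecidableEq X] (g : FreeGroup X) : Reduced (FreeGroup.toWord g) :=
  chain'_of_reduce (FreeGroup.reduce_toWord g)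

theorem toWord_mk_of_reduced [DecidableEq X] {w : List (Letter X)} (h : Reduced w) :
    (FreeGroup.mk w).toWord = w := by
  rw [FreeGroup.toWord_mk, reduce_eq_self_of_chain' h]

theorem one_mem_munn (w : List (Letter X)) : (1 : FreeGroup X) ∈ munn w :=
  ⟨[], List.nil_prefix, mk_nil_eq⟩

theorem self_mem_munn (w : List (Letter X)) : FreeGroup.mk w ∈ munn w :=
  ⟨w, List.prefix_refl w, rfl⟩

theorem munn_mono {u v : List (Letter X)} (h : u <+: v) : munn u ⊆ munn v :=
  fun _ ⟨p, hp, hm⟩ => ⟨p, hp.trans h, hm⟩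

theorem exists_min_prefix {P : List (Letter X) → Prop} {v : List (Letter X)}
    (h : ∃ p, p <+: v ∧ P p) :
    ∃ r, r <+: v ∧ P r ∧ ∀ p, p <+: v → P p → r.length ≤ p.length := by
  classical
  obtain ⟨p0, hp0, hP0⟩ := h
  have hn : ∃ n, ∃ p, p <+: v ∧ p.length = n ∧ P p := ⟨p0.length, p0, hp0, rfl, hP0⟩
  obtain ⟨r, hr, hl, hP⟩ := Nat.find_spec hn
  exact ⟨r, hr, hP, fun p hp hPp => hl ▸ Nat.find_min' hn ⟨p, hp, rfl, hPp⟩⟩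

theorem exists_max_prefix {P : List (Letter X) → Prop} {v : List (Letter X)} (h : P []) :
    ∃ q, q <+: v ∧ P q ∧ ∀ p, p <+: v → P p → p.length ≤ q.length := by
  classical
  set Q : ℕ → Prop := fun n => ∃ p, p <+: v ∧ p.length = n ∧ P p with hQ
  have h0 : Q 0 := ⟨[], List.nil_prefix, rfl, h⟩
  have hspec : Q (Nat.findGreatest Q v.length) :=
    Nat.findGreatest_spec (Nat.zero_le _) h0
  obtain ⟨q, hqv, hql, hqP⟩ := hspec
  refine ⟨q, hqv, hqP, fun p hp hPp => ?_⟩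
  rw [hql]
  exact Nat.le_findGreatest hp.length_le ⟨p, hp, rfl, hPp⟩

/-- Geodesic lemma: every prefix of the reduced form of `mk w` appears in the Munn tree. -/
theorem geodesic [DecidableEq X] :
    ∀ (w p : List (Letter X)), p <+: (FreeGroup.mk w).toWord → FreeGroup.mk p ∈ munn w := by
  intro w
  induction w using List.reverseRecOn with
  | nil =>
    intro p hp
    rw [mk_nil_eq, FreeGroup.toWord_one] at hp
    rw [List.prefix_nil.mp hp, mk_nil_eq]
    exact one_mem_munn _
  | append_singleton w' a ih =>
    intro p hp
    set L := (FreeGroup.mk w').toWord with hLdef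
    have hmkL : FreeGroup.mk L = FreeGroup.mk w' := FreeGroup.mk_toWord
    have hLred : Reduced L := toWord_reduced _
    have hmk : FreeGroup.mk (w' ++ [a]) = FreeGroup.mk (L ++ [a]) := by
      rw [mk_app, mk_app, hmkL]
    rcases List.eq_nil_or_concat L with hL | ⟨L', b, hL⟩
    · -- mk w' = 1
      have h1 : FreeGroup.mk w' = 1 := by rw [← hmkL, hL, mk_nil_eq]
      have : (FreeGroup.mk (w' ++ [a])).toWord = [a] := by
        rw [mk_app, h1, one_mul]
        exact toWord_mk_of_reduced (List.isChain_singleton a)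
      rw [this] at hp
      rcases hp with ⟨t, ht⟩
      match p, t, ht with
      | [], _, _ => rw [mk_nil_eq]; exact one_mem_munn _
      | [c], [], ht =>
        have hca : c = a := by injection ht
        subst hca
        have he : FreeGroup.mk [c] = FreeGroup.mk (w' ++ [c]) := by
          rw [mk_app, h1, one_mul]
        rw [he]
        exact self_mem_munn _
    · rw [List.concat_eq_append] at hL
      by_cases hba : a = linv b
      · -- cancellation: mk (w' ++ [a]) = mk L'
        have hc : FreeGroup.mk (w' ++ [a]) = FreeGroup.mk L' := by
          rw [hmk, hL, List.append_assoc, mk_app, mk_app, hba, mk_linv, mul_inv_cancel,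
            mul_one]
        have hL'red : Reduced L' := hLred.prefix (hL ▸ List.prefix_append L' [b])
        have : (FreeGroup.mk (w' ++ [a])).toWord = L' := by
          rw [hc, toWord_mk_of_reduced hL'red]
        rw [this] at hp
        have hp' : p <+: L := hp.trans (hL ▸ List.prefix_append L' [b])
        exact munn_mono (List.prefix_append w' [a]) (ih p hp')
      · -- no cancellation
        have hred2 : Reduced (L ++ [a]) := by
          rw [Reduced, List.Chain', List.isChain_append]
          refine ⟨hLred, List.isChain_singleton a, ?_⟩
          intro c hc y hy
          rw [hL, List.getLast?_concat] at hc
          simp only [Option.mem_def, Option.some.injEq, List.head?_cons] at hc hy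
          subst hy
          rw [← hc]
          exact fun h' => hba h'
        have htW : (FreeGroup.mk (w' ++ [a])).toWord = L ++ [a] := by
          rw [hmk, toWord_mk_of_reduced hred2]
        rw [htW] at hp
        by_cases hlen : p.length ≤ L.length
        · have hpL : p <+: L :=
            List.prefix_of_prefix_length_le hp (List.prefix_append L [a]) hlen
          exact munn_mono (List.prefix_append w' [a]) (ih p hpL)
        · have hpe : p = L ++ [a] := hp.eq_of_length_le (by
            simp only [List.length_append, List.length_singleton]; omega)
          subst hpe
          rw [← hmk]
          exact self_mem_munn _


theorem lemmaB_triv {X : Type} (v : List (Letter X)) (x : Letter X)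
    (h1 : FreeGroup.mk v = 1) (hx : FreeGroup.mk [x] ∉ munn v) :
    ∃ (q ys : List (Letter X)) (fs' : List (List (Letter X))),
      fs'.length = ys.length ∧
      v = q ++ interF ys fs' ∧
      IsIdemWord q ∧ Avoids q x ∧
      Reduced ys ∧ FreeGroup.mk ys = FreeGroup.mk v ∧
      ys.head? ≠ some x ∧
      (∀ p ∈ fs'.zip ys, IsIdemWord p.1 ∧ Avoids p.1 (linv p.2)) := by
  refine ⟨v, [], [], rfl, by simp [interF], h1, ?_, List.isChain_nil, ?_, by simp, by simp⟩
  · rintro ⟨_, _, hmem⟩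
    exact hx hmem
  · rw [mk_nil_eq, h1]

theorem lemmaB {X : Type} [DecidableEq X] :
    ∀ (n : ℕ) (v : List (Letter X)) (x : Letter X), v.length ≤ n →
      FreeGroup.mk [x] ∉ munn v →
      ∃ (q ys : List (Letter X)) (fs' : List (List (Letter X))),
        fs'.length = ys.length ∧
        v = q ++ interF ys fs' ∧
        IsIdemWord q ∧ Avoids q x ∧
        Reduced ys ∧ FreeGroup.mk ys = FreeGroup.mk v ∧
        ys.head? ≠ some x ∧
        (∀ p ∈ fs'.zip ys, IsIdemWord p.1 ∧ Avoids p.1 (linv p.2)) := by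
  intro n
  induction n with
  | zero =>
    intro v x hlen hx
    have hv : v = [] := List.length_eq_zero_iff.mp (Nat.le_zero.mp hlen)
    subst hv
    exact lemmaB_triv [] x mk_nil_eq hx
  | succ m ih =>
    intro v x hlen hx
    by_cases h1 : FreeGroup.mk v = 1
    · exact lemmaB_triv v x h1 hx
    · obtain ⟨q, hqv, hq1, hqmax⟩ :=
        exists_max_prefix (P := fun p => FreeGroup.mk p = 1) (v := v) mk_nil_eq
      obtain ⟨r, hr⟩ := hqv
      have hqv : q <+: v := ⟨r, hr⟩
      rcases r with _ | ⟨y₁, v3⟩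
      · rw [List.append_nil] at hr
        exact absurd (hr ▸ hq1) h1
      · have hv : v = q ++ y₁ :: v3 := hr.symm
        have hlen3 : v3.length ≤ m := by
          have := congrArg List.length hv
          simp only [List.length_append, List.length_cons] at this
          omega
        have hx3 : FreeGroup.mk [linv y₁] ∉ munn v3 := by
          rintro ⟨p, hp, hm⟩
          have hpre : q ++ y₁ :: p <+: v := by
            rw [hv]
            exact prefix_append_left q (List.cons_prefix_cons.mpr ⟨rfl, hp⟩)
          have hone : FreeGroup.mk (q ++ y₁ :: p) = 1 := by
            have he : q ++ y₁ :: p = (q ++ [y₁]) ++ p := by simp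
            rw [he, mk_app, mk_app, hq1, one_mul, hm, mk_linv, mul_inv_cancel]
          have hle := hqmax _ hpre hone
          simp only [List.length_append, List.length_cons] at hle
          omega
        obtain ⟨q₂, ys₂, fs₂, hl₂, hv₂, hq₂, hav₂, hred₂, hmk₂, hhd₂, hpair₂⟩ :=
          ih v3 (linv y₁) hlen3 hx3
        refine ⟨q, y₁ :: ys₂, q₂ :: fs₂, by simp [hl₂], ?_, hq1, ?_, ?_, ?_, ?_, ?_⟩
        · rw [hv, hv₂]
          simp [interF]
        · rintro ⟨_, _, ⟨p, hp, hm⟩⟩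
          exact hx ⟨p, hp.trans hqv, hm⟩
        · rw [Reduced, List.Chain', List.isChain_cons]
          refine ⟨fun b hb hbe => hhd₂ ?_, hred₂⟩
          rw [← hbe]
          exact hb
        · rw [hv]
          have he : q ++ y₁ :: v3 = (q ++ [y₁]) ++ v3 := by simp
          rw [he, mk_app, mk_app, hq1, one_mul]
          rw [show y₁ :: ys₂ = [y₁] ++ ys₂ from rfl, mk_app, hmk₂]
        · simp only [List.head?_cons, ne_eq, Option.some.injEq]
          intro hyx
          apply hx
          refine ⟨q ++ [y₁], ?_, ?_⟩
          · rw [hv]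
            exact ⟨v3, by simp⟩
          · rw [mk_app, hq1, one_mul, hyx]
        · intro p hp
          rw [List.zip_cons_cons] at hp
          rcases List.mem_cons.mp hp with h | h
          · rw [h]
            exact ⟨hq₂, hav₂⟩
          · exact hpair₂ p h

theorem lemmaA {X : Type} [DecidableEq X] :
    ∀ (ws v : List (Letter X)) (x : Letter X),
      Reduced (ws ++ [x]) →
      FreeGroup.mk ws ∈ munn v →
      FreeGroup.mk (ws ++ [x]) ∉ munn v →
      ∃ (es' : List (List (Letter X))) (q : List (Letter X))
        (ys : List (Letter X)) (fs' : List (List (Letter X))),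
        es'.length = ws.length ∧ fs'.length = ys.length ∧
        v = interE es' ws ++ q ++ interF ys fs' ∧
        (∀ p ∈ es'.zip ws, IsIdemWord p.1 ∧ Avoids p.1 p.2) ∧
        IsIdemWord q ∧ Avoids q x ∧
        Reduced ys ∧ FreeGroup.mk ys = (FreeGroup.mk ws)⁻¹ * FreeGroup.mk v ∧
        ys.head? ≠ some x ∧
        (∀ p ∈ fs'.zip ys, IsIdemWord p.1 ∧ Avoids p.1 (linv p.2)) := by
  intro ws
  induction ws with
  | nil =>
    intro v x hred hwv hx
    obtain ⟨q, ys, fs', hl, hv, hq, hav, hredys, hmk, hhd, hpair⟩ :=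
      lemmaB v.length v x (le_refl _) (by simpa using hx)
    refine ⟨[], q, ys, fs', rfl, hl, ?_, by simp, hq, hav, hredys, ?_, hhd, hpair⟩
    · simpa [interE] using hv
    · rw [hmk, mk_nil_eq, inv_one, one_mul]
  | cons x₁ ws' ih =>
    intro v x hred hwv hx
    have hws_red : Reduced (x₁ :: ws') :=
      List.IsChain.prefix hred (List.prefix_append _ _)
    have hmkws : FreeGroup.mk (x₁ :: ws') = FreeGroup.mk [x₁] * FreeGroup.mk ws' :=
      mk_app [x₁] ws'
    obtain ⟨p₀, hp₀v, hp₀⟩ := hwv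
    have hp₀W : (FreeGroup.mk p₀).toWord = x₁ :: ws' := by
      rw [hp₀, toWord_mk_of_reduced hws_red]
    have hx₁mem : ∃ p, p <+: v ∧ FreeGroup.mk p = FreeGroup.mk [x₁] := by
      obtain ⟨p', hp', hm'⟩ := geodesic p₀ [x₁] (by rw [hp₀W]; exact ⟨ws', rfl⟩)
      exact ⟨p', hp'.trans hp₀v, hm'⟩
    obtain ⟨r, hrv, hr₁, hrmin⟩ := exists_min_prefix hx₁mem
    have hrne : r ≠ [] := by
      intro h
      rw [h, mk_nil_eq] at hr₁
      have hW := congrArg FreeGroup.toWord hr₁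
      rw [FreeGroup.toWord_one, toWord_mk_of_reduced (List.isChain_singleton x₁)] at hW
      cases hW
    rcases List.eq_nil_or_concat r with h | ⟨e₁, a, hre⟩
    · exact absurd h hrne
    rw [List.concat_eq_append] at hre
    have hfirst : ∀ p, p <+: e₁ → FreeGroup.mk p ≠ FreeGroup.mk [x₁] := by
      intro p hp hm
      have hpv : p <+: v := hp.trans ((hre ▸ List.prefix_append e₁ [a]).trans hrv)
      have h1 := hrmin p hpv hm
      have h2 : e₁.length < r.length := by rw [hre]; simp
      have h3 := hp.length_le
      omega
    have hra : FreeGroup.mk r = FreeGroup.mk e₁ * FreeGroup.mk [a] := by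
      rw [hre, mk_app]
    have hax : a = x₁ := by
      by_contra hax
      have hme₁ : FreeGroup.mk e₁ = FreeGroup.mk [x₁, linv a] := by
        have h2 : FreeGroup.mk e₁ = FreeGroup.mk [x₁] * (FreeGroup.mk [a])⁻¹ := by
          rw [← hr₁, hra, mul_assoc, mul_inv_cancel, mul_one]
        rw [h2, ← mk_linv, ← mk_app]
        rfl
      have hrw : Reduced [x₁, linv a] := by
        rw [Reduced, List.Chain', List.isChain_cons_cons]
        refine ⟨fun h => hax ?_, List.isChain_singleton _⟩
        have := congrArg linv h
        simpa [linv] using this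
      obtain ⟨p', hp', hm'⟩ := geodesic e₁ [x₁] (by
        rw [hme₁, toWord_mk_of_reduced hrw]
        exact ⟨[linv a], rfl⟩)
      exact hfirst p' hp' hm'
    subst hax
    have he₁ : FreeGroup.mk e₁ = 1 := by
      have h2 : FreeGroup.mk e₁ * FreeGroup.mk [a] = 1 * FreeGroup.mk [a] := by
        rw [← hra, hr₁, one_mul]
      exact mul_right_cancel h2
    obtain ⟨v', hv'⟩ := hrv
    have hrp₀ : r <+: p₀ := by
      refine List.prefix_of_prefix_length_le ⟨v', hv'⟩ hp₀v ?_
      by_contra hlen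
      push_neg at hlen
      obtain ⟨p', hp', hm'⟩ := geodesic p₀ [a] (by rw [hp₀W]; exact ⟨ws', rfl⟩)
      have := hrmin p' (hp'.trans hp₀v) hm'
      have := hp'.length_le
      omega
    obtain ⟨p₁, hp₁⟩ := hrp₀
    have hp₁v' : p₁ <+: v' := by
      obtain ⟨t, ht⟩ := hp₀v
      refine ⟨t, List.append_cancel_left (as := r) ?_⟩
      rw [← List.append_assoc, hp₁, ht, hv']
    have hmkp₁ : FreeGroup.mk p₁ = FreeGroup.mk ws' := by
      have h2 : FreeGroup.mk p₀ = FreeGroup.mk r * FreeGroup.mk p₁ := by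
        rw [← hp₁, mk_app]
      have h3 := hp₀.symm.trans h2
      rw [hr₁, hmkws] at h3
      exact (mul_left_cancel h3).symm
    have hwv' : FreeGroup.mk ws' ∈ munn v' := ⟨p₁, hp₁v', hmkp₁⟩
    have hx' : FreeGroup.mk (ws' ++ [x]) ∉ munn v' := by
      rintro ⟨p, hp, hm⟩
      apply hx
      refine ⟨r ++ p, ?_, ?_⟩
      · rw [← hv']
        exact prefix_append_left r hp
      · rw [mk_app, hr₁, hm, ← mk_app]
        rfl
    have hred' : Reduced (ws' ++ [x]) := List.IsChain.tail hred
    obtain ⟨es₂, q, ys, fs', hl₁, hl₂, hveq, hpairsE, hq, hav, hredys, hmkys, hhd, hpairsF⟩ :=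
      ih v' x hred' hwv' hx'
    refine ⟨e₁ :: es₂, q, ys, fs', by simp [hl₁], hl₂, ?_, ?_, hq, hav, hredys, ?_, hhd, hpairsF⟩
    · rw [← hv', hre, hveq]
      simp [interE]
    · intro p hp
      rw [List.zip_cons_cons] at hp
      rcases List.mem_cons.mp hp with h | h
      · rw [h]
        refine ⟨he₁, ?_⟩
        rintro ⟨_, _, ⟨p', hp', hm'⟩⟩
        exact hfirst p' hp' hm'
      · exact hpairsE p h
    · rw [hmkys, ← hv', mk_app, hr₁, hmkws]
      group

end Helper


/-- If `T_v` contains the reduced word `w` but not the edge `(w, wx)`, then `v` factors as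
`v = e₁'x₁⋯e_m'x_m · q · y₁f₁'⋯y_nf_n'` with each `eᵢ'` an idempotent word avoiding `xᵢ`,
`q` an idempotent word avoiding `x`, `y₁⋯y_n` the reduced form of `w⁻¹·π(v)` with
`y₁ ≠ x`, and each `fᵢ'` an idempotent word avoiding `ȳᵢ`. -/
theorem factor_avoiding_edge {X : Type} [Fintype X]
    (v ws : List (Letter X)) (x : Letter X)
    (hred : Reduced (ws ++ [x]))
    (hwv : FreeGroup.mk ws ∈ munn v)
    (hnoedge : ¬ EdgeIn v ws x) :
    ∃ (es' : List (List (Letter X))) (q : List (Letter X))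
      (ys : List (Letter X)) (fs' : List (List (Letter X))),
      es'.length = ws.length ∧ fs'.length = ys.length ∧
      v = interE es' ws ++ q ++ interF ys fs' ∧
      (∀ p ∈ es'.zip ws, IsIdemWord p.1 ∧ Avoids p.1 p.2) ∧
      IsIdemWord q ∧ Avoids q x ∧
      Reduced ys ∧ FreeGroup.mk ys = (FreeGroup.mk ws)⁻¹ * FreeGroup.mk v ∧
      ys.head? ≠ some x ∧
      (∀ p ∈ fs'.zip ys, IsIdemWord p.1 ∧ Avoids p.1 (linv p.2)) := by
  classical
  have hx : FreeGroup.mk (ws ++ [x]) ∉ munn v := fun hmem => hnoedge ⟨hred, hwv, hmem⟩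
  exact Helper.lemmaA ws v x hred hwv hx
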